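/- SRM success probability for BSC channel coding: applying the square-root (pretty-good) measurement to the CQ embedding of coding with C^⊥ on BSC(p) yields success probability Σ_{v ∈ C^⫫} [Σ_{u ∈ v ⊕ C^⊥} (p^{w_H(u)}(1-p)^{n-w_H(u)})²] / [Σ_{u ∈ v ⊕ C^⊥} p^{w_H(u)}(1-p)^{n-w_H(u)}]. Equivalently, this equals Σ over cosets of (2-norm²)/(1-norm) of the coset probability vectors, which is at most the MAP success probability Σ_{v ∈ C^⫫} max_{u ∈ v ⊕ C^⊥} p^{w_H(u)}(1-p)^{n-w_H(u)}, with equality iff each coset probability vector is supported on a single point or uniform on its support appropriately. -/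
import Mathlib


open Matrix
open scoped Classical

noncomputable section

/-- Hamming weight of a binary vector. -/
def hammingWt {ι : Type*} [Fintype ι] (v : ι → ZMod 2) : ℕ :=
  (Finset.univ.filter fun i => v i ≠ 0).card

/-- i.i.d. Bernoulli(p) probability of an error vector. -/
def bernP (p : ℝ) (n : ℕ) {ι : Type*} [Fintype ι] (v : ι → ZMod 2) : ℝ :=
  p ^ hammingWt v * (1 - p) ^ (n - hammingWt v)

/-- α'(v) = ∑_{c ∈ C^⊥} p_{c ⊕ v}. -/
def alphaP {n m : ℕ} (p : ℝ) (Gperp : Matrix (Fin m) (Fin n) (ZMod 2))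
    (v : Fin n → ZMod 2) : ℝ :=
  ∑ z : Fin m → ZMod 2, bernP p n (v + Matrix.vecMul z Gperp)

/-- The square-root-measurement POVM element Π_z = ∑_v (p_{c_z⊕v}/α'(v))|v⟩⟨v|
for the CQ embedding of coding with C^⊥ on BSC(p). -/
def srmMeas {n m : ℕ} (p : ℝ) (Gperp : Matrix (Fin m) (Fin n) (ZMod 2))
    (z : Fin m → ZMod 2) : Matrix (Fin n → ZMod 2) (Fin n → ZMod 2) ℂ :=
  Matrix.diagonal fun v =>
    ((bernP p n (v + Matrix.vecMul z Gperp) / alphaP p Gperp v : ℝ) : ℂ)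

lemma bernP_pos {ι : Type*} [Fintype ι] {p : ℝ} (hp0 : 0 < p) (hp1 : p < 1) (n : ℕ)
    (v : ι → ZMod 2) : 0 < bernP p n v :=
  mul_pos (pow_pos hp0 _) (pow_pos (by linarith) _)

lemma sum_shift {n m : ℕ} (G : Matrix (Fin m) (Fin n) (ZMod 2))
    (f : (Fin n → ZMod 2) → ℝ) (v : Fin n → ZMod 2) (u : Fin m → ZMod 2) :
    ∑ z : Fin m → ZMod 2, f (v + Matrix.vecMul u G + Matrix.vecMul z G)
      = ∑ z : Fin m → ZMod 2, f (v + Matrix.vecMul z G) := by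
  apply Fintype.sum_bijective (fun z => u + z) (Equiv.addLeft u).bijective
  intro z
  rw [Matrix.add_vecMul, add_assoc]

lemma alphaP_shift {n m : ℕ} (p : ℝ) (G : Matrix (Fin m) (Fin n) (ZMod 2))
    (v : Fin n → ZMod 2) (u : Fin m → ZMod 2) :
    alphaP p G (v + Matrix.vecMul u G) = alphaP p G v :=
  sum_shift G (bernP p n) v u

/-- The SRM success probability for coding with C^⊥ on BSC(p)
equals ∑ over cosets of (2-norm²)/(1-norm) of the coset probability vectors, and
is at most the MAP success probability ∑ over cosets of the max coset
probability. -/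
theorem srm_bsc_success_probability (n k m : ℕ) (p : ℝ)
    (hp0 : 0 < p) (hp1 : p < 1)
    (Gperp : Matrix (Fin m) (Fin n) (ZMod 2))
    (Gdd : Matrix (Fin k) (Fin n) (ZMod 2))
    (hpart : ∀ x : Fin n → ZMod 2,
      ∃! zw : (Fin m → ZMod 2) × (Fin k → ZMod 2),
        x = Matrix.vecMul zw.1 Gperp + Matrix.vecMul zw.2 Gdd) :
    (∑ z : Fin m → ZMod 2, ((2 : ℝ) ^ m)⁻¹ *
        (Matrix.trace
          (Matrix.diagonal (fun v => (bernP p n (v + Matrix.vecMul z Gperp) : ℂ))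
            * srmMeas p Gperp z)).re)
      = ∑ w : Fin k → ZMod 2,
          (∑ u : Fin m → ZMod 2,
              (bernP p n (Matrix.vecMul w Gdd + Matrix.vecMul u Gperp)) ^ 2) /
            (∑ u : Fin m → ZMod 2,
              bernP p n (Matrix.vecMul w Gdd + Matrix.vecMul u Gperp)) ∧
    (∑ z : Fin m → ZMod 2, ((2 : ℝ) ^ m)⁻¹ *
        (Matrix.trace
          (Matrix.diagonal (fun v => (bernP p n (v + Matrix.vecMul z Gperp) : ℂ))
            * srmMeas p Gperp z)).re)
      ≤ ∑ w : Fin k → ZMod 2,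
          Finset.univ.sup' Finset.univ_nonempty
            (fun u : Fin m → ZMod 2 =>
              bernP p n (Matrix.vecMul w Gdd + Matrix.vecMul u Gperp)) := by
  have hP : ∀ v : Fin n → ZMod 2, 0 < bernP p n v := bernP_pos hp0 hp1 n
  -- Step 1: simplify the trace
  have htr : ∀ z : Fin m → ZMod 2,
      (Matrix.trace
          (Matrix.diagonal (fun v => (bernP p n (v + Matrix.vecMul z Gperp) : ℂ))
            * srmMeas p Gperp z)).re
        = ∑ v : Fin n → ZMod 2,
            bernP p n (v + Matrix.vecMul z Gperp)
              * (bernP p n (v + Matrix.vecMul z Gperp) / alphaP p Gperp v) := by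
    intro z
    rw [srmMeas, Matrix.diagonal_mul_diagonal, Matrix.trace_diagonal]
    rw [Complex.re_sum]
    congr 1
    ext v
    rw [show ∀ a b : ℝ, ((a:ℂ) * (b:ℂ)).re = a * b by intro a b; rw [← Complex.ofReal_mul, Complex.ofReal_re]]
  -- key equality
  have key : (∑ z : Fin m → ZMod 2, ((2 : ℝ) ^ m)⁻¹ *
        (Matrix.trace
          (Matrix.diagonal (fun v => (bernP p n (v + Matrix.vecMul z Gperp) : ℂ))
            * srmMeas p Gperp z)).re)
      = ∑ w : Fin k → ZMod 2,
          (∑ u : Fin m → ZMod 2,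
              (bernP p n (Matrix.vecMul w Gdd + Matrix.vecMul u Gperp)) ^ 2) /
            (∑ u : Fin m → ZMod 2,
              bernP p n (Matrix.vecMul w Gdd + Matrix.vecMul u Gperp)) := by
    simp only [htr]
    rw [← Finset.mul_sum, Finset.sum_comm]
    -- now goal: (2^m)⁻¹ * ∑ v ∑ z ... = RHS
    set g : (Fin n → ZMod 2) → ℝ := fun v =>
      ∑ z : Fin m → ZMod 2,
        bernP p n (v + Matrix.vecMul z Gperp)
          * (bernP p n (v + Matrix.vecMul z Gperp) / alphaP p Gperp v) with hg
    have hfbij : Function.Bijective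
        (fun zw : (Fin m → ZMod 2) × (Fin k → ZMod 2) =>
          Matrix.vecMul zw.1 Gperp + Matrix.vecMul zw.2 Gdd) := by
      constructor
      · intro a b hab
        obtain ⟨c, _, hu⟩ := hpart (Matrix.vecMul a.1 Gperp + Matrix.vecMul a.2 Gdd)
        have ha := hu a rfl
        have hb := hu b hab
        rw [ha, hb]
      · intro x
        obtain ⟨c, hc, _⟩ := hpart x
        exact ⟨c, hc.symm⟩
    have hreindex : ∑ v : Fin n → ZMod 2, g v
        = ∑ zw : (Fin m → ZMod 2) × (Fin k → ZMod 2),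
            g (Matrix.vecMul zw.1 Gperp + Matrix.vecMul zw.2 Gdd) :=
      (Fintype.sum_bijective _ hfbij _ _ (fun x => rfl)).symm
    have hginv : ∀ (u : Fin m → ZMod 2) (w : Fin k → ZMod 2),
        g (Matrix.vecMul u Gperp + Matrix.vecMul w Gdd)
          = g (Matrix.vecMul w Gdd) := by
      intro u w
      have hcomm : Matrix.vecMul u Gperp + Matrix.vecMul w Gdd
          = Matrix.vecMul w Gdd + Matrix.vecMul u Gperp := add_comm _ _
      rw [hg]
      simp only [hcomm, alphaP_shift]
      exact sum_shift Gperp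
        (fun x => bernP p n x * (bernP p n x / alphaP p Gperp (Matrix.vecMul w Gdd)))
        (Matrix.vecMul w Gdd) u
    rw [hreindex, Fintype.sum_prod_type]
    simp only [hginv]
    rw [Finset.sum_const, Finset.card_univ]
    have hcard : Fintype.card (Fin m → ZMod 2) = 2 ^ m := by simp
    rw [hcard, nsmul_eq_mul]
    push_cast
    rw [← mul_assoc, inv_mul_cancel₀ (by positivity : ((2:ℝ)^m) ≠ 0), one_mul]
    congr 1
    ext w
    rw [hg]
    have : ∀ z : Fin m → ZMod 2,
        bernP p n (Matrix.vecMul w Gdd + Matrix.vecMul z Gperp)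
          * (bernP p n (Matrix.vecMul w Gdd + Matrix.vecMul z Gperp)
              / alphaP p Gperp (Matrix.vecMul w Gdd))
        = (bernP p n (Matrix.vecMul w Gdd + Matrix.vecMul z Gperp)) ^ 2
            / alphaP p Gperp (Matrix.vecMul w Gdd) := by
      intro z; rw [sq]; ring
    simp only [this]
    rw [← Finset.sum_div]
    rfl
  refine ⟨key, ?_⟩
  rw [key]
  apply Finset.sum_le_sum
  intro w _
  set q : (Fin m → ZMod 2) → ℝ := fun u =>
    bernP p n (Matrix.vecMul w Gdd + Matrix.vecMul u Gperp) with hq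
  have hS : 0 < ∑ u, q u :=
    Finset.sum_pos (fun u _ => hP _) Finset.univ_nonempty
  rw [div_le_iff₀ hS, Finset.mul_sum]
  apply Finset.sum_le_sum
  intro u _
  rw [sq]
  exact mul_le_mul_of_nonneg_right
    (Finset.le_sup' q (Finset.mem_univ u)) (hP _).le


end
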